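/- Let $H$ be a separable real Hilbert space, let $I$ be a nonempty finite set, let $(I_n)_{n\in\mathbb{N}}$ be random nonempty subsets of $I$ with $I_0 = I$, and let $i \in I$ be such that the events $([i \in I_n])_{n\in\mathbb{N}}$ are mutually independent and satisfy, for some $N \ge 1$ and $\pi \in (0,1]$, $P\big(\bigcup_{j=n}^{n+N-1}[i \in I_j]\big) \ge \pi$ for all $n$. Set $\vartheta(n) = \max\{j \le n : i \in I_j\}$. Let $(x_n)_{n\in\mathbb{N}}$ be a sequence in $L^2(\Omega,\mathcal{F},P;H)$ with $\sum_{n\in\mathbb{N}} E\|x_{n+1}-x_n\|^2 < +\infty$. Then $E\|x_{\vartheta(n)} - x_n\| \to 0$, i.e., $x_{\vartheta(n)} - x_n \to 0$ in $L^1(\Omega,\mathcal{F},P;H)$. -/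

import Mathlib

open MeasureTheory Filter ProbabilityTheory
open scoped Classical
open scoped ENNReal


-- Cauchy-Schwarz on a set
lemma myCS {Ω : Type*} [MeasurableSpace Ω] (P : Measure Ω) [IsProbabilityMeasure P]
    {B : Set Ω} (hB : MeasurableSet B) {g : Ω → ℝ} (hg : MemLp g 2 P)
    (hg0 : ∀ ω, 0 ≤ g ω) :
    ∫ ω, B.indicator g ω ∂P ≤ Real.sqrt (P B).toReal * Real.sqrt (∫ ω, g ω ^ 2 ∂P) := by
  have h2 : (2 : ℝ≥0∞) = ENNReal.ofReal (2 : ℝ) := by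
    rw [ENNReal.ofReal_ofNat]
  have hpq : Real.HolderConjugate 2 2 := Real.HolderConjugate.two_two
  have hf : MemLp (B.indicator (fun _ => (1:ℝ))) (ENNReal.ofReal (2:ℝ)) P := by
    rw [← h2]; exact (memLp_const (1:ℝ)).indicator hB
  have hg2 : MemLp g (ENNReal.ofReal (2:ℝ)) P := by rw [← h2]; exact hg
  have key := integral_mul_le_Lp_mul_Lq_of_nonneg hpq
    (Filter.Eventually.of_forall (fun ω => Set.indicator_nonneg (fun _ _ => zero_le_one) ω))
    (Filter.Eventually.of_forall hg0) hf hg2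
  have heq : ∀ ω, B.indicator (fun _ => (1:ℝ)) ω * g ω = B.indicator g ω := by
    intro ω
    by_cases h : ω ∈ B <;> simp [Set.indicator_of_mem, Set.indicator_of_notMem, h]
  rw [show (fun a => B.indicator (fun _ => (1:ℝ)) a * g a) = fun a => B.indicator g a from
    funext heq] at key
  have hfp : ∀ ω, B.indicator (fun _ => (1:ℝ)) ω ^ (2:ℝ) = B.indicator (fun _ => (1:ℝ)) ω := by
    intro ω
    by_cases h : ω ∈ B
    · simp [Set.indicator_of_mem, h]
    · simp only [Set.indicator_of_notMem h]
      exact Real.zero_rpow (by norm_num)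
  have hgp : ∀ ω, g ω ^ (2:ℝ) = g ω ^ (2:ℕ) := by
    intro ω
    rw [show ((2:ℝ) = ((2:ℕ):ℝ)) by norm_num, Real.rpow_natCast]
  simp only [hfp, hgp] at key
  rw [show (fun (_ : Ω) => (1:ℝ)) = (1 : Ω → ℝ) from rfl, integral_indicator_one hB] at key
  calc ∫ ω, B.indicator g ω ∂P ≤ (P B).toReal ^ (1/(2:ℝ)) * (∫ a, g a ^ (2:ℕ) ∂P) ^ (1/(2:ℝ)) := key
    _ = Real.sqrt (P B).toReal * Real.sqrt (∫ ω, g ω ^ 2 ∂P) := by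
        rw [← Real.sqrt_eq_rpow, ← Real.sqrt_eq_rpow]



lemma mysqrt_pow (x : ℝ) (hx : 0 ≤ x) (m : ℕ) : Real.sqrt (x ^ m) = Real.sqrt x ^ m := by
  induction m with
  | zero => simp
  | succ k ih => rw [pow_succ, pow_succ, Real.sqrt_mul (pow_nonneg hx k), ih]

lemma kernel_sum_le {c : ℝ} (hc0 : 0 ≤ c) (hc1 : c < 1) {N : ℕ} (hN : 1 ≤ N) (n : ℕ) :
    ∑ j ∈ Finset.range n, c ^ ((n - j) / N) ≤ (N : ℝ) * (1 - c)⁻¹ := by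
  have hNpos : 0 < N := hN
  -- reflect
  have hrefl : ∑ j ∈ Finset.range n, c ^ ((n - j) / N)
      = ∑ j ∈ Finset.range n, c ^ ((n - (n - 1 - j)) / N) :=
    (Finset.sum_range_reflect (fun j => c ^ ((n - j) / N)) n).symm
  have hle1 : ∑ j ∈ Finset.range n, c ^ ((n - (n - 1 - j)) / N)
      ≤ ∑ j ∈ Finset.range n, c ^ (j / N) := by
    apply Finset.sum_le_sum
    intro j hj
    rw [Finset.mem_range] at hj
    have : n - (n - 1 - j) = j + 1 := by omega
    rw [this]
    exact pow_le_pow_of_le_one hc0 hc1.le (Nat.div_le_div_right (Nat.le_succ j))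
  -- group bound
  have hgroup : ∀ m : ℕ, ∑ j ∈ Finset.range (m * N), c ^ (j / N)
      = (∑ k ∈ Finset.range m, c ^ k) * (N : ℝ) := by
    intro m
    induction m with
    | zero => simp
    | succ k ih =>
      have h1 : k * N ≤ (k+1) * N := by nlinarith
      rw [Finset.range_eq_Ico, ← Finset.sum_Ico_consecutive _ (Nat.zero_le (k*N)) h1,
        ← Finset.range_eq_Ico, ih]
      have h2 : ∑ j ∈ Finset.Ico (k*N) ((k+1)*N), c ^ (j / N) = (N:ℝ) * c ^ k := by
        rw [Finset.sum_congr rfl (fun j hj => ?_), Finset.sum_const, Nat.card_Ico]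
        · have : (k+1)*N - k*N = N := by rw [Nat.succ_mul]; omega
          rw [this, nsmul_eq_mul]
        · rw [Finset.mem_Ico] at hj
          rw [Nat.div_eq_of_lt_le hj.1 hj.2]
      rw [h2, Finset.sum_range_succ]
      ring
  have hmono : ∑ j ∈ Finset.range n, c ^ (j / N) ≤ ∑ j ∈ Finset.range (n * N), c ^ (j / N) := by
    apply Finset.sum_le_sum_of_subset_of_nonneg
    · exact Finset.range_subset_range.2 (Nat.le_mul_of_pos_right n hNpos)
    · intro j _ _; exact pow_nonneg hc0 _
  have hgeom : (∑ k ∈ Finset.range n, c ^ k) ≤ (1 - c)⁻¹ := by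
    have := (summable_geometric_of_lt_one hc0 hc1).sum_le_tsum (Finset.range n)
      (fun i _ => pow_nonneg hc0 i)
    rwa [tsum_geometric_of_lt_one hc0 hc1] at this
  calc ∑ j ∈ Finset.range n, c ^ ((n - j) / N)
      ≤ ∑ j ∈ Finset.range n, c ^ (j / N) := by rw [hrefl]; exact hle1
    _ ≤ ∑ j ∈ Finset.range (n * N), c ^ (j / N) := hmono
    _ = (∑ k ∈ Finset.range n, c ^ k) * (N : ℝ) := hgroup n
    _ ≤ (1 - c)⁻¹ * (N : ℝ) := by
        apply mul_le_mul_of_nonneg_right hgeom (Nat.cast_nonneg N)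
    _ = (N : ℝ) * (1 - c)⁻¹ := by ring

lemma conv_tendsto {a : ℕ → ℝ} (ha0 : ∀ j, 0 ≤ a j) (ha : Tendsto a atTop (nhds 0))
    {c : ℝ} (hc0 : 0 ≤ c) (hc1 : c < 1) {N : ℕ} (hN : 1 ≤ N) :
    Tendsto (fun n => ∑ j ∈ Finset.range n, c ^ ((n - j) / N) * a j) atTop (nhds 0) := by
  have hNpos : 0 < N := hN
  have hK : (0:ℝ) < (N : ℝ) * (1 - c)⁻¹ := by
    apply mul_pos
    · exact_mod_cast hNpos
    · exact inv_pos.2 (by linarith)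
  set K := (N : ℝ) * (1 - c)⁻¹ with hKdef
  rw [Metric.tendsto_atTop]
  intro ε hε
  -- choose m with a j ≤ ε / (2 K) for j ≥ m
  obtain ⟨m, hm⟩ := (Metric.tendsto_atTop.1 ha (ε / (2 * K)) (by positivity))
  have hma : ∀ j, m ≤ j → a j ≤ ε / (2 * K) := by
    intro j hj
    have := hm j hj
    rw [Real.dist_eq, sub_zero, abs_of_nonneg (ha0 j)] at this
    exact this.le
  set S := ∑ j ∈ Finset.range m, a j with hS
  have hS0 : 0 ≤ S := Finset.sum_nonneg fun j _ => ha0 j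
  -- c ^ ((n - m + 1)/N) * S → 0
  have hexp : Tendsto (fun n => (n - m + 1) / N) atTop atTop := by
    apply tendsto_atTop_atTop.2
    intro b
    refine ⟨m + b * N, fun n hn => ?_⟩
    have h1 : b * N ≤ n - m + 1 := by omega
    calc b = b * N / N := (Nat.mul_div_cancel b hNpos).symm
      _ ≤ (n - m + 1) / N := Nat.div_le_div_right h1
  have h1 : Tendsto (fun n => c ^ ((n - m + 1) / N) * S) atTop (nhds 0) := by
    have := ((tendsto_pow_atTop_nhds_zero_of_lt_one hc0 hc1).comp hexp).mul_const S
    simpa using this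
  obtain ⟨n₀, hn₀⟩ := (Metric.tendsto_atTop.1 h1 (ε / 2) (by positivity))
  refine ⟨max m n₀, fun n hn => ?_⟩
  have hmn : m ≤ n := le_trans (le_max_left _ _) hn
  have hb0 : 0 ≤ ∑ j ∈ Finset.range n, c ^ ((n - j) / N) * a j :=
    Finset.sum_nonneg fun j _ => mul_nonneg (pow_nonneg hc0 _) (ha0 j)
  rw [Real.dist_eq, sub_zero, abs_of_nonneg hb0]
  -- split
  have hsplit : ∑ j ∈ Finset.range n, c ^ ((n - j) / N) * a j
      = ∑ j ∈ Finset.range m, c ^ ((n - j) / N) * a j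
        + ∑ j ∈ Finset.Ico m n, c ^ ((n - j) / N) * a j := by
    rw [Finset.range_eq_Ico, ← Finset.sum_Ico_consecutive _ (Nat.zero_le m) hmn,
      ← Finset.range_eq_Ico]
  have hterm1 : ∑ j ∈ Finset.range m, c ^ ((n - j) / N) * a j ≤ c ^ ((n - m + 1) / N) * S := by
    rw [hS, Finset.mul_sum]
    apply Finset.sum_le_sum
    intro j hj
    rw [Finset.mem_range] at hj
    apply mul_le_mul_of_nonneg_right _ (ha0 j)
    apply pow_le_pow_of_le_one hc0 hc1.le
    apply Nat.div_le_div_right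
    omega
  have hterm2 : ∑ j ∈ Finset.Ico m n, c ^ ((n - j) / N) * a j ≤ ε / 2 := by
    have step1 : ∑ j ∈ Finset.Ico m n, c ^ ((n - j) / N) * a j
        ≤ ∑ j ∈ Finset.Ico m n, c ^ ((n - j) / N) * (ε / (2 * K)) := by
      apply Finset.sum_le_sum
      intro j hj
      rw [Finset.mem_Ico] at hj
      exact mul_le_mul_of_nonneg_left (hma j hj.1) (pow_nonneg hc0 _)
    have step2 : ∑ j ∈ Finset.Ico m n, c ^ ((n - j) / N) ≤ K := by
      calc ∑ j ∈ Finset.Ico m n, c ^ ((n - j) / N)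
          ≤ ∑ j ∈ Finset.range n, c ^ ((n - j) / N) := by
            apply Finset.sum_le_sum_of_subset_of_nonneg
            · intro j hj
              rw [Finset.mem_Ico] at hj
              exact Finset.mem_range.2 hj.2
            · intro j _ _; exact pow_nonneg hc0 _
        _ ≤ K := kernel_sum_le hc0 hc1 hN n
    calc ∑ j ∈ Finset.Ico m n, c ^ ((n - j) / N) * a j
        ≤ ∑ j ∈ Finset.Ico m n, c ^ ((n - j) / N) * (ε / (2 * K)) := step1
      _ = (∑ j ∈ Finset.Ico m n, c ^ ((n - j) / N)) * (ε / (2 * K)) := by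
          rw [Finset.sum_mul]
      _ ≤ K * (ε / (2 * K)) := by
          apply mul_le_mul_of_nonneg_right step2 (by positivity)
      _ = ε / 2 := by field_simp
  have hterm1' : c ^ ((n - m + 1) / N) * S < ε / 2 := by
    have := hn₀ n (le_trans (le_max_right _ _) hn)
    rw [Real.dist_eq, sub_zero] at this
    calc c ^ ((n - m + 1) / N) * S ≤ |c ^ ((n - m + 1) / N) * S| := le_abs_self _
      _ < ε / 2 := this
  rw [hsplit]
  linarith


theorem stmt6 {Ω ι H : Type*} [MeasurableSpace Ω] [Fintype ι] [Nonempty ι]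
    [NormedAddCommGroup H] [InnerProductSpace ℝ H] [CompleteSpace H]
    [SecondCountableTopology H]
    (P : Measure Ω) [IsProbabilityMeasure P]
    (I : ℕ → Ω → Set ι)
    (hne : ∀ n ω, (I n ω).Nonempty)
    (h0 : ∀ ω, I 0 ω = Set.univ)
    (i : ι)
    (hmeas : ∀ n, MeasurableSet {ω | i ∈ I n ω})
    (hindep : iIndepSet (fun n => {ω | i ∈ I n ω}) P)
    (N : ℕ) (hN : 1 ≤ N) (π : ℝ) (hπ0 : 0 < π) (hπ1 : π ≤ 1)
    (hπ : ∀ n, ENNReal.ofReal π ≤ P (⋃ j ∈ Finset.Ico n (n + N), {ω | i ∈ I j ω}))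
    (x : ℕ → Ω → H) (hx : ∀ n, MemLp (x n) 2 P)
    (hsum : Summable (fun n => ∫ ω, ‖x (n + 1) ω - x n ω‖ ^ 2 ∂P)) :
    Tendsto
      (fun n => ∫ ω, ‖x (Nat.findGreatest (fun j => i ∈ I j ω) n) ω - x n ω‖ ∂P)
      atTop (nhds 0) := by
  set A : ℕ → Set Ω := fun n => {ω | i ∈ I n ω} with hA
  set c : ℝ := Real.sqrt (1 - π) with hc
  have hc0 : 0 ≤ c := Real.sqrt_nonneg _
  have hc1 : c < 1 := by
    rw [hc]
    exact (Real.sqrt_lt' one_pos).2 (by nlinarith)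
  set a : ℕ → ℝ := fun j => Real.sqrt (∫ ω, ‖x (j + 1) ω - x j ω‖ ^ 2 ∂P) with ha
  have ha0 : ∀ j, 0 ≤ a j := fun j => Real.sqrt_nonneg _
  have hatend : Tendsto a atTop (nhds 0) := by
    have := hsum.tendsto_atTop_zero.sqrt
    simpa using this
  -- independence machinery
  have hiI : iIndep (fun n => MeasurableSpace.generateFrom {A n}) P :=
    (ProbabilityTheory.iIndepSet_iff_iIndep A P).mp hindep
  have hprod : ∀ s : Finset ℕ, P (⋂ k ∈ s, (A k)ᶜ) = ∏ k ∈ s, P ((A k)ᶜ) := by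
    intro s
    exact hiI.meas_biInter (fun k _ =>
      (MeasurableSpace.measurableSet_generateFrom (Set.mem_singleton _)).compl)
  have hblock : ∀ t, P (⋂ k ∈ Finset.Ico t (t + N), (A k)ᶜ) ≤ 1 - ENNReal.ofReal π := by
    intro t
    have hco : (⋂ k ∈ Finset.Ico t (t + N), ((A k)ᶜ : Set Ω))
        = (⋃ k ∈ Finset.Ico t (t + N), A k)ᶜ := (Set.compl_iUnion₂ _).symm
    have hU : MeasurableSet (⋃ k ∈ Finset.Ico t (t + N), A k) :=
      MeasurableSet.biUnion (Finset.countable_toSet _) (fun k _ => hmeas k)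
    rw [hco, prob_compl_eq_one_sub hU]
    exact tsub_le_tsub_left (hπ t) 1
  have hfree : (1 : ℝ≥0∞) - ENNReal.ofReal π ≠ ⊤ :=
    ne_top_of_le_ne_top ENNReal.one_ne_top tsub_le_self
  have hchain : ∀ s m : ℕ, P (⋂ k ∈ Finset.Ico s (s + m * N), (A k)ᶜ)
      ≤ (1 - ENNReal.ofReal π) ^ m := by
    intro s m
    induction m with
    | zero => simp
    | succ k ih =>
      rw [hprod, show s + (k + 1) * N = s + k * N + N by ring,
        ← Finset.prod_Ico_consecutive _ (Nat.le_add_right s (k * N)) (Nat.le_add_right _ N),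
        pow_succ]
      exact mul_le_mul' (by rw [← hprod]; exact ih) (by rw [← hprod]; exact hblock (s + k * N))
  -- the key measure bound
  set B : ℕ → ℕ → Set Ω := fun j n => ⋂ k ∈ Finset.Ioc j n, ((A k)ᶜ : Set Ω) with hB
  have hBmeas : ∀ j n, MeasurableSet (B j n) := fun j n =>
    MeasurableSet.biInter (Finset.countable_toSet _) (fun k _ => (hmeas k).compl)
  have hPB : ∀ j n, j ≤ n → Real.sqrt (P (B j n)).toReal ≤ c ^ ((n - j) / N) := by
    intro j n hjn
    set m := (n - j) / N with hm
    have hmN : m * N ≤ n - j := Nat.div_mul_le_self (n - j) N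
    have hsubset : B j n ⊆ ⋂ k ∈ Finset.Ico (j + 1) (j + 1 + m * N), ((A k)ᶜ : Set Ω) := by
      intro ω hω
      simp only [hB, Set.mem_iInter] at hω ⊢
      intro k hk
      rw [Finset.mem_Ico] at hk
      refine hω k ?_
      rw [Finset.mem_Ioc]
      omega
    have h1 : P (B j n) ≤ (1 - ENNReal.ofReal π) ^ m :=
      le_trans (measure_mono hsubset) (hchain (j + 1) m)
    have h2 : (P (B j n)).toReal ≤ (1 - π) ^ m := by
      have h3 := ENNReal.toReal_mono (ENNReal.pow_ne_top hfree) h1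
      rwa [ENNReal.toReal_pow, ENNReal.toReal_sub_of_le (ENNReal.ofReal_le_one.2 hπ1)
        ENNReal.one_ne_top, ENNReal.toReal_one, ENNReal.toReal_ofReal hπ0.le] at h3
    calc Real.sqrt (P (B j n)).toReal ≤ Real.sqrt ((1 - π) ^ m) := Real.sqrt_le_sqrt h2
      _ = c ^ m := by rw [mysqrt_pow _ (by linarith) m]
  -- master inequality
  have hgℒp : ∀ j, MemLp (fun ω => ‖x (j + 1) ω - x j ω‖) 2 P := fun j =>
    ((hx (j + 1)).sub (hx j)).norm
  have master : ∀ n, ∫ ω, ‖x (Nat.findGreatest (fun j => i ∈ I j ω) n) ω - x n ω‖ ∂P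
      ≤ ∑ j ∈ Finset.range n, c ^ ((n - j) / N) * a j := by
    intro n
    set G : Ω → ℝ := fun ω =>
      ∑ j ∈ Finset.range n, (B j n).indicator (fun ω => ‖x (j + 1) ω - x j ω‖) ω with hG
    have hind_int : ∀ j, Integrable ((B j n).indicator (fun ω => ‖x (j + 1) ω - x j ω‖)) P :=
      fun j => ((hgℒp j).integrable one_le_two).indicator (hBmeas j n)
    have hGint : Integrable G P := integrable_finset_sum _ (fun j _ => hind_int j)
    have hpt : ∀ ω, ‖x (Nat.findGreatest (fun j => i ∈ I j ω) n) ω - x n ω‖ ≤ G ω := by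
      intro ω
      set θ := Nat.findGreatest (fun j => i ∈ I j ω) n with hθ
      have hθn : θ ≤ n := Nat.findGreatest_le n
      have htel : ∑ j ∈ Finset.Ico θ n, (x (j + 1) ω - x j ω) = x n ω - x θ ω := by
        rw [Finset.sum_Ico_eq_sub _ hθn, Finset.sum_range_sub (fun j => x j ω),
          Finset.sum_range_sub (fun j => x j ω)]
        abel
      calc ‖x θ ω - x n ω‖ = ‖x n ω - x θ ω‖ := norm_sub_rev _ _
        _ = ‖∑ j ∈ Finset.Ico θ n, (x (j + 1) ω - x j ω)‖ := by rw [htel]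
        _ ≤ ∑ j ∈ Finset.Ico θ n, ‖x (j + 1) ω - x j ω‖ := norm_sum_le _ _
        _ = ∑ j ∈ Finset.Ico θ n,
            (B j n).indicator (fun ω => ‖x (j + 1) ω - x j ω‖) ω := by
          refine Finset.sum_congr rfl (fun j hj => ?_)
          rw [Finset.mem_Ico] at hj
          have hωB : ω ∈ B j n := by
            simp only [hB, Set.mem_iInter]
            intro k hk
            rw [Finset.mem_Ioc] at hk
            exact Nat.findGreatest_is_greatest (lt_of_le_of_lt hj.1 hk.1) hk.2
          rw [Set.indicator_of_mem hωB]
        _ ≤ G ω := by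
          refine Finset.sum_le_sum_of_subset_of_nonneg
            (fun j hj => Finset.mem_range.2 (Finset.mem_Ico.1 hj).2)
            (fun j _ _ => Set.indicator_nonneg (fun ω _ => norm_nonneg _) ω)
    by_cases hF : Integrable
        (fun ω => ‖x (Nat.findGreatest (fun j => i ∈ I j ω) n) ω - x n ω‖) P
    · calc ∫ ω, ‖x (Nat.findGreatest (fun j => i ∈ I j ω) n) ω - x n ω‖ ∂P
          ≤ ∫ ω, G ω ∂P := integral_mono hF hGint hpt
        _ = ∑ j ∈ Finset.range n,
            ∫ ω, (B j n).indicator (fun ω => ‖x (j + 1) ω - x j ω‖) ω ∂P :=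
          integral_finset_sum _ (fun j _ => hind_int j)
        _ ≤ ∑ j ∈ Finset.range n, c ^ ((n - j) / N) * a j := by
          refine Finset.sum_le_sum (fun j hj => ?_)
          rw [Finset.mem_range] at hj
          calc ∫ ω, (B j n).indicator (fun ω => ‖x (j + 1) ω - x j ω‖) ω ∂P
              ≤ Real.sqrt (P (B j n)).toReal
                * Real.sqrt (∫ ω, ‖x (j + 1) ω - x j ω‖ ^ 2 ∂P) :=
                myCS P (hBmeas j n) (hgℒp j) (fun ω => norm_nonneg _)
            _ ≤ c ^ ((n - j) / N) * a j :=
                mul_le_mul_of_nonneg_right (hPB j n hj.le) (Real.sqrt_nonneg _)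
    · rw [integral_undef hF]
      exact Finset.sum_nonneg (fun j _ => mul_nonneg (pow_nonneg hc0 _) (ha0 j))
  exact squeeze_zero (fun n => integral_nonneg (fun ω => norm_nonneg _)) master
    (conv_tendsto ha0 hatend hc0 hc1 hN)
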